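/- Let (X,p) be a complete partial metric space and f : X → X a mapping such that there is s with 0 ≤ s < 1 and p(f(x), f(y)) ≤ s·p(x,y) for all x, y ∈ X. Then f has a unique fixed point x*, and p(x*, x*) = 0. (Matthews fixed point theorem.) -/

import Mathlib

open scoped NNReal

/-- Matthews fixed point theorem: a contraction on a complete
partial metric space has a unique fixed point `x*`, and `p(x*,x*) = 0`.
Completeness: every Cauchy sequence (i.e. one for which `lim_{n,m} p(xₙ,xₘ)`
exists) converges in the topology of `p` to a point `l` with
`p(l,l) = lim_{n,m} p(xₙ,xₘ)`. -/
theorem baire_stmt6 {X : Type*} [Nonempty X] (p : X → X → ℝ≥0)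
    (h1 : ∀ x y, (p x x = p x y ∧ p x y = p y y) ↔ x = y)
    (h2 : ∀ x y, p x x ≤ p x y)
    (h3 : ∀ x y, p x y = p y x)
    (h4 : ∀ x y z, p x y + p z z ≤ p x z + p z y)
    (hcomp : ∀ (x : ℕ → X) (L : ℝ≥0),
      Filter.Tendsto (fun mn : ℕ × ℕ => p (x mn.1) (x mn.2)) Filter.atTop (nhds L) →
      ∃ l : X, p l l = L ∧
        ∀ ε : ℝ≥0, 0 < ε → ∃ N, ∀ n, N ≤ n → p l (x n) < p l l + ε)
    (f : X → X) (s : ℝ≥0) (hs : s < 1)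
    (hcontr : ∀ x y, p (f x) (f y) ≤ s * p x y) :
    ∃ x, f x = x ∧ p x x = 0 ∧ ∀ y, f y = y → y = x := by
  obtain ⟨x0⟩ := ‹Nonempty X›
  set x : ℕ → X := fun n => f^[n] x0 with hx
  set C : ℝ≥0 := p (x 0) (x 1) / (1 - s) with hC
  have hs1 : (1 : ℝ≥0) - s ≠ 0 := by
    simp only [ne_eq, tsub_eq_zero_iff_le, not_le]
    exact hs
  have hCeq : p (x 0) (x 1) + s * C = C := by
    have h : (1 - s) * C = p (x 0) (x 1) := by
      rw [hC, mul_comm]; exact div_mul_cancel₀ _ hs1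
    calc p (x 0) (x 1) + s * C = (1 - s) * C + s * C := by rw [h]
      _ = ((1 - s) + s) * C := (add_mul _ _ _).symm
      _ = C := by rw [tsub_add_cancel_of_le hs.le, one_mul]
  have htri : ∀ a b c, p a b ≤ p a c + p c b := fun a b c =>
    le_trans le_self_add (h4 a b c)
  have hA : ∀ m, p (x 0) (x m) ≤ C := by
    intro m
    induction m with
    | zero =>
      calc p (x 0) (x 0) ≤ p (x 0) (x 1) := h2 _ _
        _ ≤ C := hCeq ▸ le_self_add
    | succ m ih =>
      have hstep : p (x 1) (x (m+1)) ≤ s * p (x 0) (x m) := by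
        have e1 : x (m+1) = f (x m) := Function.iterate_succ_apply' f m x0
        have e2 : x 1 = f (x 0) := rfl
        rw [e1, e2]; exact hcontr _ _
      calc p (x 0) (x (m+1)) ≤ p (x 0) (x 1) + p (x 1) (x (m+1)) := htri _ _ _
        _ ≤ p (x 0) (x 1) + s * p (x 0) (x m) := add_le_add_right hstep _
        _ ≤ p (x 0) (x 1) + s * C := add_le_add_right (mul_le_mul_right ih s) _
        _ = C := hCeq
  have hB : ∀ n m, p (x n) (x (n + m)) ≤ s ^ n * p (x 0) (x m) := by
    intro n
    induction n with
    | zero => intro m; simp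
    | succ n ih =>
      intro m
      have e1 : x (n+1) = f (x n) := Function.iterate_succ_apply' f n x0
      have e2 : x (n+1+m) = f (x (n+m)) := by
        rw [show n+1+m = (n+m)+1 by ring]
        exact Function.iterate_succ_apply' f (n+m) x0
      calc p (x (n+1)) (x (n+1+m)) = p (f (x n)) (f (x (n+m))) := by rw [e1, e2]
        _ ≤ s * p (x n) (x (n+m)) := hcontr _ _
        _ ≤ s * (s ^ n * p (x 0) (x m)) := mul_le_mul_right (ih m) s
        _ = s ^ (n+1) * p (x 0) (x m) := by ring
  have hbound : ∀ n m, p (x n) (x m) ≤ s ^ min n m * C := by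
    have key : ∀ n m, n ≤ m → p (x n) (x m) ≤ s ^ n * C := by
      intro n m hnm
      obtain ⟨k, rfl⟩ := Nat.exists_eq_add_of_le hnm
      exact (hB n k).trans (mul_le_mul_right (hA k) _)
    intro n m
    rcases le_total n m with h | h
    · rw [min_eq_left h]; exact key n m h
    · rw [min_eq_right h, h3]; exact key m n h
  have hmin : Filter.Tendsto (fun mn : ℕ × ℕ => min mn.1 mn.2)
      Filter.atTop Filter.atTop := by
    apply Filter.tendsto_atTop.2
    intro b
    filter_upwards [Filter.eventually_ge_atTop (b, b)] with mn h
    exact le_min h.1 h.2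
  have hpow : Filter.Tendsto (fun mn : ℕ × ℕ => s ^ min mn.1 mn.2 * C)
      Filter.atTop (nhds 0) := by
    have h0 : Filter.Tendsto (fun k : ℕ => s ^ k) Filter.atTop (nhds 0) :=
      NNReal.tendsto_pow_atTop_nhds_zero_of_lt_one hs
    have := (h0.comp hmin).mul_const C
    simpa using this
  have htends : Filter.Tendsto (fun mn : ℕ × ℕ => p (x mn.1) (x mn.2))
      Filter.atTop (nhds 0) :=
    tendsto_of_tendsto_of_tendsto_of_le_of_le tendsto_const_nhds hpow
      (fun mn => zero_le) (fun mn => hbound mn.1 mn.2)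
  obtain ⟨l, hll, hconv⟩ := hcomp x 0 htends
  have hfl0 : p (f l) l = 0 := by
    by_contra hne
    have hpos : 0 < p (f l) l := pos_iff_ne_zero.2 hne
    set ε := p (f l) l with hε
    obtain ⟨N, hN⟩ := hconv (ε / 2) (by positivity)
    have h01 : p l (x N) < ε / 2 := by simpa [hll] using hN N le_rfl
    have h02 : p l (x (N+1)) < ε / 2 := by simpa [hll] using hN (N+1) (Nat.le_succ N)
    have step : p (f l) (x (N+1)) ≤ s * p l (x N) := by
      have e1 : x (N+1) = f (x N) := Function.iterate_succ_apply' f N x0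
      rw [e1]; exact hcontr l (x N)
    have : p (f l) l < ε := by
      calc p (f l) l ≤ p (f l) (x (N+1)) + p (x (N+1)) l := htri _ _ _
        _ ≤ s * p l (x N) + p l (x (N+1)) := by
            rw [h3 (x (N+1)) l]; exact add_le_add_left step _
        _ ≤ p l (x N) + p l (x (N+1)) :=
            add_le_add_left (mul_le_of_le_one_left zero_le hs.le) _
        _ < ε / 2 + ε / 2 := by
            exact add_lt_add h01 h02
        _ = ε := add_halves ε
    exact absurd this (lt_irrefl _)
  have hflfl : p (f l) (f l) = 0 :=
    le_antisymm (hfl0 ▸ h2 (f l) l) zero_le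
  have hfix : f l = l := (h1 (f l) l).1 ⟨by rw [hflfl, hfl0], by rw [hfl0, hll]⟩
  refine ⟨l, hfix, hll, ?_⟩
  intro y hy
  have hyl : p y l = 0 := by
    by_contra hne
    have hpos : 0 < p y l := pos_iff_ne_zero.2 hne
    have : p y l ≤ s * p y l := by
      conv_lhs => rw [← hy, ← hfix]
      exact hcontr y l
    have hlt : s * p y l < 1 * p y l := mul_lt_mul_of_pos_right hs hpos
    rw [one_mul] at hlt
    exact absurd (this.trans_lt hlt) (lt_irrefl _)
  have hyy : p y y = 0 := le_antisymm (hyl ▸ h2 y l) zero_le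
  exact (h1 y l).1 ⟨by rw [hyy, hyl], by rw [hyl, hll]⟩
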